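/- Let V be a lextensive category with set-indexed copowers of 1. Then the terminal object 1 of V is connected (i.e., the functor V(1,−) : V → Set preserves set-indexed coproducts) if and only if the copower functor Set → V, X ↦ X · 1, is fully faithful. -/

import Mathlib

open CategoryTheory CategoryTheory.Limits Opposite

universe v u

variable (V : Type u) [Category.{v} V]

/-- The copower functor `Set → V`, `X ↦ X · 1`. -/
noncomputable def copowerFunctor [HasTerminal V] [HasCoproducts.{v} V] : Type v ⥤ V where
  obj X := ∐ fun (_ : X) => (⊤_ V)
  map {X Y} f := Sigma.desc fun x => Sigma.ι (fun (_ : Y) => (⊤_ V)) (f x)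
  map_id X := by ext x; simp
  map_comp {X Y Z} f g := by ext x; simp

variable {V}

section Aux

variable [HasTerminal V] [HasCoproducts.{v} V]

/-- If `V(1,-)` preserves coproducts, then the canonical map `X → V(1, X·1)` is bijective. -/
lemma bij_of_preserves
    (H : ∀ ι : Type v, PreservesColimitsOfShape (Discrete ι) (coyoneda.obj (op (⊤_ V))))
    (X : Type v) :
    Function.Bijective (fun x : X => (Sigma.ι (fun _ : X => (⊤_ V)) x :
      (⊤_ V) ⟶ ∐ fun _ : X => (⊤_ V))) := by
  haveI := H X
  set F := Discrete.functor (fun _ : X => (⊤_ V)) with hF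
  have hc : IsColimit ((coyoneda.obj (op (⊤_ V))).mapCocone (colimit.cocone F)) :=
    isColimitOfPreserves _ (colimit.isColimit F)
  let d : Cocone (F ⋙ coyoneda.obj (op (⊤_ V))) :=
    { pt := X
      ι := Discrete.natTrans (fun j => TypeCat.ofHom (fun _ => j.as)) }
  let r : ((⊤_ V) ⟶ ∐ fun _ : X => (⊤_ V)) → X := hc.desc d
  have hr : ∀ (x : X) (g : (⊤_ V) ⟶ (⊤_ V)),
      r (g ≫ Sigma.ι (fun _ : X => (⊤_ V)) x) = x := by
    intro x g
    exact ConcreteCategory.congr_hom (hc.fac d ⟨x⟩) g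
  constructor
  · intro x x' hxx'
    have h1 := hr x (𝟙 _)
    have h2 := hr x' (𝟙 _)
    rw [Category.id_comp] at h1 h2
    rw [← h1, ← h2]
    exact congrArg r hxx'
  · intro h
    refine ⟨r h, ?_⟩
    have : (fun h => Sigma.ι (fun _ : X => (⊤_ V)) (r h)) =
        (id : ((⊤_ V) ⟶ ∐ fun _ : X => (⊤_ V)) → _) := by
      funext g0
      refine ConcreteCategory.congr_hom (hc.hom_ext
        (f := TypeCat.ofHom (fun h => Sigma.ι (fun _ : X => (⊤_ V)) (r h))) (f' := 𝟙 _) ?_) g0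
      rintro ⟨x⟩
      refine ConcreteCategory.hom_ext _ _ fun g => ?_
      have hg : g = 𝟙 (⊤_ V) := Subsingleton.elim (α := (⊤_ V) ⟶ (⊤_ V)) _ _
      show Sigma.ι (fun _ : X => (⊤_ V)) (r (g ≫ colimit.ι F ⟨x⟩)) = g ≫ colimit.ι F ⟨x⟩
      rw [hg, Category.id_comp]
      congr 1
      have := hr x (𝟙 _)
      rwa [Category.id_comp] at this
    exact congrFun this h

/-- If the canonical maps are bijective, the copower functor is full and faithful. -/
lemma fullFaithful_of_bij
    (hbij : ∀ X : Type v, Function.Bijective (fun x : X => (Sigma.ι (fun _ : X => (⊤_ V)) x :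
      (⊤_ V) ⟶ ∐ fun _ : X => (⊤_ V)))) :
    (copowerFunctor V).Full ∧ (copowerFunctor V).Faithful := by
  constructor
  · refine ⟨fun {X Y} h => ?_⟩
    refine ⟨TypeCat.ofHom fun x => Function.surjInv (hbij Y).2
      (Sigma.ι (fun _ : X => (⊤_ V)) x ≫ h), ?_⟩
    apply Sigma.hom_ext
    intro x
    show Sigma.ι (fun _ : X => (⊤_ V)) x ≫ Sigma.desc _ = _
    refine (Sigma.ι_desc _ _).trans ?_
    exact Function.surjInv_eq (hbij Y).2 _
  · refine ⟨fun {X Y} f g hfg => ?_⟩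
    refine ConcreteCategory.hom_ext _ _ fun x => ?_
    apply (hbij Y).1
    have h1 : Sigma.ι (fun _ : X => (⊤_ V)) x ≫ (copowerFunctor V).map f =
        Sigma.ι (fun _ : X => (⊤_ V)) x ≫ (copowerFunctor V).map g := by rw [hfg]
    show Sigma.ι (fun _ : Y => (⊤_ V)) (f x) = Sigma.ι (fun _ : Y => (⊤_ V)) (g x)
    have e1 : Sigma.ι (fun _ : X => (⊤_ V)) x ≫ (copowerFunctor V).map f =
        Sigma.ι (fun _ : Y => (⊤_ V)) (f x) := by
      show Sigma.ι (fun _ : X => (⊤_ V)) x ≫ Sigma.desc _ = _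
      exact Sigma.ι_desc _ _
    have e2 : Sigma.ι (fun _ : X => (⊤_ V)) x ≫ (copowerFunctor V).map g =
        Sigma.ι (fun _ : Y => (⊤_ V)) (g x) := by
      show Sigma.ι (fun _ : X => (⊤_ V)) x ≫ Sigma.desc _ = _
      exact Sigma.ι_desc _ _
    rw [← e1, ← e2, h1]

/-- If the copower functor is full and faithful, the canonical maps are bijective. -/
lemma bij_of_fullFaithful
    (h : (copowerFunctor V).Full ∧ (copowerFunctor V).Faithful) (X : Type v) :
    Function.Bijective (fun x : X => (Sigma.ι (fun _ : X => (⊤_ V)) x :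
      (⊤_ V) ⟶ ∐ fun _ : X => (⊤_ V))) := by
  obtain ⟨hFull, hFaith⟩ := h
  constructor
  · intro x x' hxx'
    have hmap : (copowerFunctor V).map (TypeCat.ofHom fun _ : PUnit.{v+1} => x) =
        (copowerFunctor V).map (TypeCat.ofHom fun _ : PUnit.{v+1} => x') := by
      apply Sigma.hom_ext
      intro p
      show Sigma.ι (fun _ : PUnit.{v+1} => (⊤_ V)) p ≫ Sigma.desc _ =
        Sigma.ι (fun _ : PUnit.{v+1} => (⊤_ V)) p ≫ Sigma.desc _
      exact (Sigma.ι_desc _ _).trans (hxx'.trans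
        (Sigma.ι_desc (fun _ : PUnit.{v+1} => Sigma.ι (fun _ : X => (⊤_ V)) x') p).symm)
    exact ConcreteCategory.congr_hom (hFaith.map_injective hmap) PUnit.unit
  · intro h
    let s : (⊤_ V) ⟶ (copowerFunctor V).obj PUnit.{v+1} :=
      Sigma.ι (fun _ : PUnit.{v+1} => (⊤_ V)) PUnit.unit
    let t : (copowerFunctor V).obj PUnit.{v+1} ⟶ (⊤_ V) := Sigma.desc fun _ => 𝟙 _
    have hst : s ≫ t = 𝟙 _ := by
      show Sigma.ι (fun _ : PUnit.{v+1} => (⊤_ V)) PUnit.unit ≫ Sigma.desc _ = _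
      rw [Sigma.ι_desc]
    obtain ⟨f, hfeq⟩ := hFull.map_surjective
      (t ≫ h : (copowerFunctor V).obj PUnit.{v+1} ⟶ (copowerFunctor V).obj X)
    refine ⟨f PUnit.unit, ?_⟩
    have e1 : s ≫ (copowerFunctor V).map f =
        Sigma.ι (fun _ : X => (⊤_ V)) (f PUnit.unit) := by
      show Sigma.ι (fun _ : PUnit.{v+1} => (⊤_ V)) PUnit.unit ≫ Sigma.desc _ = _
      exact Sigma.ι_desc _ _
    exact e1.symm.trans ((congrArg (s ≫ ·) hfeq).trans
      ((Category.assoc s t h).symm.trans (by rw [hst, Category.id_comp])))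

/-- If the terminal object maps to an initial object, all hom-sets out of it are trivial. -/
lemma hom_ext_of_to_initial [HasInitial V]
    (hVK : ∀ {ι : Type v} (F : Discrete ι ⥤ V) (c : Cocone F),
      IsColimit c → IsVanKampenColimit c)
    (z : (⊤_ V) ⟶ ⊥_ V) {A : V} (w w' : (⊤_ V) ⟶ A) : w = w' := by
  let F0 : Discrete PEmpty.{v+1} ⥤ V := Functor.empty V
  have hvk0 := hVK F0 (colimit.cocone F0) (colimit.isColimit F0)
  let cT : Cocone F0 :=
    { pt := ⊤_ V
      ι := { app := fun j => j.as.elim, naturality := fun j _ _ => j.as.elim } }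
  have hne : Nonempty (IsColimit cT) := by
    refine (hvk0 cT (𝟙 F0) (z ≫ initial.to _) ?_ ?_).mpr ?_
    · ext j; exact j.as.elim
    · intro j _ _; exact j.as.elim
    · intro j; exact j.as.elim
  obtain ⟨hT⟩ := hne
  let dA : Cocone F0 :=
    { pt := A
      ι := { app := fun j => j.as.elim, naturality := fun j _ _ => j.as.elim } }
  rw [hT.uniq dA w (fun j => j.as.elim), hT.uniq dA w' (fun j => j.as.elim)]

end Aux

section Key

variable [HasFiniteLimits V] [HasCoproducts.{v} V]

lemma key_factorization
    (hVK : ∀ {ι : Type v} (F : Discrete ι ⥤ V) (c : Cocone F),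
      IsColimit c → IsVanKampenColimit c)
    (hbij : ∀ X : Type v, Function.Bijective (fun x : X => (Sigma.ι (fun _ : X => (⊤_ V)) x :
      (⊤_ V) ⟶ ∐ fun _ : X => (⊤_ V))))
    {ι : Type v} (F : Discrete ι ⥤ V) (h : (⊤_ V) ⟶ colimit F) :
    ∃! p : Σ j : ι, ((⊤_ V) ⟶ F.obj ⟨j⟩), p.2 ≫ colimit.ι F ⟨p.1⟩ = h := by
  haveI : HasInitial V :=
    hasColimitsOfShape_of_equivalence
      (Discrete.equivalence (Equiv.equivPEmpty PEmpty.{v+1} : PEmpty.{v+1} ≃ PEmpty.{1}))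
  let c := colimit.cocone F
  have hvk := hVK F c (colimit.isColimit F)
  have hpc : ∀ i : ι, pullback.fst h (c.ι.app ⟨i⟩) ≫ h =
      pullback.snd h (c.ι.app ⟨i⟩) ≫ colimit.ι F ⟨i⟩ := fun i => pullback.condition
  -- pull back the coproduct decomposition along `h`
  let P : ι → V := fun i => pullback h (c.ι.app ⟨i⟩)
  let F' : Discrete ι ⥤ V := Discrete.functor P
  let c' : Cocone F' := Cofan.mk (⊤_ V) (fun i => (pullback.fst h (c.ι.app ⟨i⟩)))
  let α : F' ⟶ F := Discrete.natTrans (fun i => pullback.snd h (c.ι.app ⟨i.as⟩))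
  have compat : α ≫ c.ι = c'.ι ≫ (Functor.const _).map h := by
    ext ⟨i⟩
    show pullback.snd h (c.ι.app ⟨i⟩) ≫ c.ι.app ⟨i⟩ = pullback.fst h (c.ι.app ⟨i⟩) ≫ h
    rw [← pullback.condition]
  have hcolim' : IsColimit c' := by
    refine ((hvk c' α h compat (NatTrans.equifibered_of_discrete α)).mpr ?_).some
    rintro ⟨i⟩
    exact IsPullback.of_hasPullback h (c.ι.app ⟨i⟩)
  -- map the pullback cofan to the copower of `ι`
  let c2 := colimit.cocone (Discrete.functor (fun _ : ι => (⊤_ V)))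
  let d2 : Cocone F' := Cofan.mk (∐ fun _ : ι => (⊤_ V))
    (fun i => pullback.fst h (c.ι.app ⟨i⟩) ≫ Sigma.ι (fun _ : ι => (⊤_ V)) i)
  let q : (⊤_ V) ⟶ ∐ fun _ : ι => (⊤_ V) := hcolim'.desc d2
  have hq : ∀ i : ι, pullback.fst h (c.ι.app ⟨i⟩) ≫ q =
      pullback.fst h (c.ι.app ⟨i⟩) ≫ Sigma.ι (fun _ : ι => (⊤_ V)) i :=
    fun i => hcolim'.fac d2 ⟨i⟩
  obtain ⟨i₀, hi₀⟩ := (hbij ι).2 q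
  -- van Kampen for the copower cofan
  have hvk2 := hVK (Discrete.functor (fun _ : ι => (⊤_ V))) c2 (colimit.isColimit _)
  let α2 : F' ⟶ Discrete.functor (fun _ : ι => (⊤_ V)) :=
    Discrete.natTrans (fun i => pullback.fst h (c.ι.app ⟨i.as⟩))
  have compat2 : α2 ≫ c2.ι = c'.ι ≫ (Functor.const _).map q := by
    ext ⟨i⟩
    exact (hq i).symm
  have sq2 := (hvk2 c' α2 q compat2 (NatTrans.equifibered_of_discrete α2)).mp
    ⟨hcolim'⟩ ⟨i₀⟩
  -- `sq2 : IsPullback (pullback.fst …) (pullback.fst …) q (Sigma.ι … i₀)`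
  have hw : (𝟙 (⊤_ V)) ≫ q = (𝟙 (⊤_ V)) ≫ c2.ι.app ⟨i₀⟩ := by
    rw [Category.id_comp, Category.id_comp]
    exact hi₀.symm
  let l := sq2.lift (𝟙 (⊤_ V)) (𝟙 (⊤_ V)) hw
  have hl : l ≫ pullback.fst h (c.ι.app ⟨i₀⟩) = 𝟙 (⊤_ V) := sq2.lift_fst _ _ _
  refine ⟨⟨i₀, l ≫ pullback.snd h (c.ι.app ⟨i₀⟩)⟩, ?_, ?_⟩
  · show (l ≫ pullback.snd h (c.ι.app ⟨i₀⟩)) ≫ colimit.ι F ⟨i₀⟩ = h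
    rw [Category.assoc, ← hpc i₀, ← Category.assoc, hl, Category.id_comp]
  · rintro ⟨j, w⟩ hw'
    have hw' : w ≫ colimit.ι F ⟨j⟩ = h := hw'
    by_cases hj : j = i₀
    · subst hj
      haveI : Mono (c.ι.app ⟨j⟩) := mono_of_cofan_isVanKampen hvk ⟨j⟩
      have : w ≫ c.ι.app ⟨j⟩ = (l ≫ pullback.snd h (c.ι.app ⟨j⟩)) ≫ c.ι.app ⟨j⟩ := by
        show w ≫ colimit.ι F ⟨j⟩ = (l ≫ pullback.snd h (c.ι.app ⟨j⟩)) ≫ colimit.ι F ⟨j⟩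
        rw [hw', Category.assoc, ← hpc j, ← Category.assoc, hl, Category.id_comp]
      have hwu : w = l ≫ pullback.snd h (c.ι.app ⟨j⟩) := by
        exact (cancel_mono (c.ι.app ⟨j⟩)).mp this
      rw [hwu]
    · exfalso
      have hne : (⟨j⟩ : Discrete ι) ≠ ⟨i₀⟩ := fun e => hj (congrArg Discrete.as e)
      have sqd := isPullback_initial_to_of_cofan_isVanKampen hvk ⟨j⟩ ⟨i₀⟩ hne
      have hcomm : w ≫ c.ι.app ⟨j⟩ =
          (l ≫ pullback.snd h (c.ι.app ⟨i₀⟩)) ≫ c.ι.app ⟨i₀⟩ := by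
        show w ≫ colimit.ι F ⟨j⟩ = (l ≫ pullback.snd h (c.ι.app ⟨i₀⟩)) ≫ colimit.ι F ⟨i₀⟩
        rw [hw', Category.assoc, ← hpc i₀, ← Category.assoc, hl, Category.id_comp]
      let z : (⊤_ V) ⟶ ⊥_ V := sqd.lift w (l ≫ pullback.snd h (c.ι.app ⟨i₀⟩)) hcomm
      have : Sigma.ι (fun _ : ι => (⊤_ V)) j = Sigma.ι (fun _ : ι => (⊤_ V)) i₀ :=
        hom_ext_of_to_initial hVK z _ _
      exact hj ((hbij ι).1 this)

/-- The mapped cocone is a colimit, given unique factorizations. -/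
noncomputable def isColimitMapped {ι : Type v} (F : Discrete ι ⥤ V)
    (key : ∀ h : (⊤_ V) ⟶ colimit F,
      ∃! p : Σ j : ι, ((⊤_ V) ⟶ F.obj ⟨j⟩), p.2 ≫ colimit.ι F ⟨p.1⟩ = h) :
    IsColimit ((coyoneda.obj (op (⊤_ V))).mapCocone (colimit.cocone F)) := by
  have huniq : ∀ (h : (⊤_ V) ⟶ colimit F) (j : ι) (g : (⊤_ V) ⟶ F.obj ⟨j⟩)
      (_ : g ≫ colimit.ι F ⟨j⟩ = h)
      (s : Cocone (F ⋙ coyoneda.obj (op (⊤_ V)))),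
      s.ι.app ⟨(key h).choose.1⟩ (key h).choose.2 = s.ι.app ⟨j⟩ g := by
    intro h j g hg s
    have he : (⟨j, g⟩ : Σ j : ι, ((⊤_ V) ⟶ F.obj ⟨j⟩)) = (key h).choose :=
      (key h).choose_spec.2 ⟨j, g⟩ hg
    rw [← he]
  refine
    { desc := fun s => TypeCat.ofHom fun h => s.ι.app ⟨(key h).choose.1⟩ (key h).choose.2
      fac := ?_
      uniq := ?_ }
  · rintro s ⟨j⟩
    refine ConcreteCategory.hom_ext _ _ fun g => ?_
    exact huniq _ j g rfl s
  · intro s m hm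
    refine ConcreteCategory.hom_ext _ _ fun h => ?_
    have hfac := (key h).choose_spec.1
    have := ConcreteCategory.congr_hom (hm ⟨(key h).choose.1⟩) (key h).choose.2
    have e : m h = m ((key h).choose.2 ≫ colimit.ι F ⟨(key h).choose.1⟩) := by rw [hfac]
    exact e.trans this

lemma preserves_of_bij
    (hVK : ∀ {ι : Type v} (F : Discrete ι ⥤ V) (c : Cocone F),
      IsColimit c → IsVanKampenColimit c)
    (hbij : ∀ X : Type v, Function.Bijective (fun x : X => (Sigma.ι (fun _ : X => (⊤_ V)) x :
      (⊤_ V) ⟶ ∐ fun _ : X => (⊤_ V)))) :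
    ∀ ι : Type v, PreservesColimitsOfShape (Discrete ι) (coyoneda.obj (op (⊤_ V))) := by
  intro ι
  exact ⟨fun {F} => preservesColimit_of_preserves_colimit_cocone (colimit.isColimit F)
    (isColimitMapped F (key_factorization hVK hbij F))⟩

end Key

variable (V)

/-- For a lextensive `V` with set-indexed copowers of the terminal object, the terminal
object `1` is connected (i.e. `V(1,−)` preserves set-indexed coproducts) if and only if the
copower functor `Set → V`, `X ↦ X·1`, is fully faithful. -/
theorem connected_iff_copowerFunctor_fullyFaithful
    [HasFiniteLimits V] [HasCoproducts.{v} V]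
    (hVK : ∀ {ι : Type v} (F : Discrete ι ⥤ V) (c : Cocone F),
      IsColimit c → IsVanKampenColimit c) :
    (∀ ι : Type v, PreservesColimitsOfShape (Discrete ι) (coyoneda.obj (op (⊤_ V)))) ↔
      ((copowerFunctor V).Full ∧ (copowerFunctor V).Faithful) := by
  constructor
  · intro H
    exact fullFaithful_of_bij (bij_of_preserves H)
  · intro h
    exact preserves_of_bij hVK (bij_of_fullFaithful h)
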